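/- Concentration of merged posterior parameter around the network average: with α^{(i)}(t) = η ∑_{τ=1}^{t-1} ∑_j (W^{t-τ})_{ij} x^{(j)}_τ + 1 where x^{(j)}_τ ∈ [0,1] and W is doubly stochastic for a strongly connected network, it holds that |α^{(i)}(t) - 1 - (η/N) S(t)| ≤ 4η log N / (1 - σ₂(W)), where S(t) = ∑_{τ=1}^{t-1} ∑_j x^{(j)}_τ. -/

import Mathlib

open Matrix Real

/-- Second-largest singular value of a doubly stochastic matrix, characterized as
the largest gain of `W` on vectors orthogonal to the all-ones vector. -/
noncomputable def secondSingular {N : ℕ} (W : Matrix (Fin N) (Fin N) ℝ) : ℝ :=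
  sSup {r | ∃ x : Fin N → ℝ, (∑ i, x i) = 0 ∧ (∑ i, (x i) ^ 2) = 1 ∧
    r = Real.sqrt (∑ i, (W.mulVec x i) ^ 2)}

section aux
variable {N : ℕ} (W : Matrix (Fin N) (Fin N) ℝ)

lemma myPowNonneg (hnonneg : ∀ i j, 0 ≤ W i j) : ∀ k i j, 0 ≤ (W ^ k) i j := by
  intro k
  induction k with
  | zero =>
      intro i j
      rw [pow_zero]
      by_cases h : i = j <;> simp [Matrix.one_apply, h]
  | succ k ih =>
      intro i j
      rw [pow_succ, Matrix.mul_apply]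
      exact Finset.sum_nonneg fun l _ => mul_nonneg (ih i l) (hnonneg l j)

lemma myPowRow (hrow : ∀ i, ∑ j, W i j = 1) : ∀ k i, ∑ j, (W ^ k) i j = 1 := by
  intro k
  induction k with
  | zero => intro i; simp [Matrix.one_apply]
  | succ k ih =>
      intro i
      simp only [pow_succ, Matrix.mul_apply]
      rw [Finset.sum_comm]
      calc ∑ l, ∑ j, (W ^ k) i l * W l j
          = ∑ l, (W ^ k) i l * ∑ j, W l j := by
            simp [Finset.mul_sum]
        _ = 1 := by simp [hrow, ih i]

lemma myPowCol (hcol : ∀ j, ∑ i, W i j = 1) : ∀ k j, ∑ i, (W ^ k) i j = 1 := by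
  intro k
  induction k with
  | zero => intro j; simp [Matrix.one_apply]
  | succ k ih =>
      intro j
      simp only [pow_succ, Matrix.mul_apply]
      rw [Finset.sum_comm]
      calc ∑ l, ∑ i, (W ^ k) i l * W l j
          = ∑ l, (∑ i, (W ^ k) i l) * W l j := by
            simp [Finset.sum_mul]
        _ = 1 := by simp [ih, hcol j]

lemma mulVec_sum_eq (M : Matrix (Fin N) (Fin N) ℝ) (hc : ∀ j, ∑ i, M i j = 1)
    (z : Fin N → ℝ) : ∑ i, M.mulVec z i = ∑ j, z j := by
  simp only [Matrix.mulVec, dotProduct]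
  rw [Finset.sum_comm]
  calc ∑ j, ∑ i, M i j * z j
      = ∑ j, (∑ i, M i j) * z j := by simp [Finset.sum_mul]
    _ = ∑ j, z j := by simp [hc]

lemma secondSingular_bddAbove (hnonneg : ∀ i j, 0 ≤ W i j)
    (hrow : ∀ i, ∑ j, W i j = 1) (hcol : ∀ j, ∑ i, W i j = 1) :
    ∀ r ∈ {r | ∃ x : Fin N → ℝ, (∑ i, x i) = 0 ∧ (∑ i, (x i) ^ 2) = 1 ∧
      r = Real.sqrt (∑ i, (W.mulVec x i) ^ 2)}, r ≤ 1 := by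
  rintro r ⟨x, -, hx2, rfl⟩
  have key : ∑ i, (W.mulVec x i) ^ 2 ≤ 1 := by
    have h1 : ∀ i, (W.mulVec x i) ^ 2 ≤ ∑ j, W i j * (x j) ^ 2 := by
      intro i
      have := Finset.sum_mul_sq_le_sq_mul_sq Finset.univ
        (fun j => Real.sqrt (W i j)) (fun j => Real.sqrt (W i j) * x j)
      have e1 : ∀ j, Real.sqrt (W i j) * (Real.sqrt (W i j) * x j) = W i j * x j := by
        intro j
        rw [← mul_assoc, Real.mul_self_sqrt (hnonneg i j)]
      have e2 : ∀ j, (Real.sqrt (W i j)) ^ 2 = W i j := fun j => Real.sq_sqrt (hnonneg i j)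
      have e3 : ∀ j, (Real.sqrt (W i j) * x j) ^ 2 = W i j * (x j) ^ 2 := by
        intro j; rw [mul_pow, e2 j]
      simp only [e1, e2, e3] at this
      calc (W.mulVec x i) ^ 2 = (∑ j, W i j * x j) ^ 2 := by
            simp [Matrix.mulVec, dotProduct]
        _ ≤ (∑ j, W i j) * ∑ j, W i j * (x j) ^ 2 := this
        _ = ∑ j, W i j * (x j) ^ 2 := by rw [hrow i, one_mul]
    calc ∑ i, (W.mulVec x i) ^ 2 ≤ ∑ i, ∑ j, W i j * (x j) ^ 2 :=
          Finset.sum_le_sum fun i _ => h1 i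
      _ = ∑ j, (∑ i, W i j) * (x j) ^ 2 := by
          rw [Finset.sum_comm]; simp [Finset.sum_mul]
      _ = 1 := by simp [hcol, hx2]
  calc Real.sqrt (∑ i, (W.mulVec x i) ^ 2) ≤ Real.sqrt 1 := Real.sqrt_le_sqrt key
    _ = 1 := Real.sqrt_one

lemma secondSingular_nonneg (hN : 2 ≤ N) (hnonneg : ∀ i j, 0 ≤ W i j)
    (hrow : ∀ i, ∑ j, W i j = 1) (hcol : ∀ j, ∑ i, W i j = 1) :
    0 ≤ secondSingular W := by
  classical
  have hbdd : BddAbove {r | ∃ x : Fin N → ℝ, (∑ i, x i) = 0 ∧ (∑ i, (x i) ^ 2) = 1 ∧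
      r = Real.sqrt (∑ i, (W.mulVec x i) ^ 2)} :=
    ⟨1, secondSingular_bddAbove W hnonneg hrow hcol⟩
  set a : Fin N := ⟨0, by omega⟩
  set b : Fin N := ⟨1, by omega⟩
  have hab : a ≠ b := by simp [a, b, Fin.ext_iff]
  set c : ℝ := (Real.sqrt 2)⁻¹ with hc
  have hc2 : c ^ 2 = 2⁻¹ := by
    rw [hc, inv_pow, Real.sq_sqrt (by norm_num : (2:ℝ) ≥ 0)]
  set x : Fin N → ℝ := fun j => if j = a then c else if j = b then -c else 0 with hxdef
  have hsum : (∑ i, x i) = 0 := by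
    have : ∀ j, x j = (if j = a then c else 0) + (if j = b then -c else 0) := by
      intro j
      by_cases h1 : j = a
      · subst h1; simp [hxdef, hab]
      · by_cases h2 : j = b <;> simp [hxdef, h1, h2, hab.symm]
    simp only [this, Finset.sum_add_distrib, Finset.sum_ite_eq', Finset.mem_univ, if_true]
    ring
  have hsq : (∑ i, (x i) ^ 2) = 1 := by
    have : ∀ j, (x j) ^ 2 = (if j = a then c ^ 2 else 0) + (if j = b then c ^ 2 else 0) := by
      intro j
      by_cases h1 : j = a
      · subst h1; simp [hxdef, hab]
      · by_cases h2 : j = b <;> simp [hxdef, h1, h2, hab.symm]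
    simp only [this, Finset.sum_add_distrib, Finset.sum_ite_eq', Finset.mem_univ, if_true, hc2]
    norm_num
  have hmem : Real.sqrt (∑ i, (W.mulVec x i) ^ 2) ∈
      {r | ∃ x : Fin N → ℝ, (∑ i, x i) = 0 ∧ (∑ i, (x i) ^ 2) = 1 ∧
        r = Real.sqrt (∑ i, (W.mulVec x i) ^ 2)} := ⟨x, hsum, hsq, rfl⟩
  exact le_trans (Real.sqrt_nonneg _) (le_csSup hbdd hmem)

lemma contraction (hnonneg : ∀ i j, 0 ≤ W i j)
    (hrow : ∀ i, ∑ j, W i j = 1) (hcol : ∀ j, ∑ i, W i j = 1)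
    (z : Fin N → ℝ) (hz : (∑ i, z i) = 0) :
    ∑ i, (W.mulVec z i) ^ 2 ≤ (secondSingular W) ^ 2 * ∑ i, (z i) ^ 2 := by
  classical
  have hbdd : BddAbove {r | ∃ x : Fin N → ℝ, (∑ i, x i) = 0 ∧ (∑ i, (x i) ^ 2) = 1 ∧
      r = Real.sqrt (∑ i, (W.mulVec x i) ^ 2)} :=
    ⟨1, secondSingular_bddAbove W hnonneg hrow hcol⟩
  by_cases h0 : (∑ i, (z i) ^ 2) = 0
  · have hz0 : ∀ i, z i = 0 := by
      intro i
      have := (Finset.sum_eq_zero_iff_of_nonneg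
        (fun i _ => sq_nonneg (z i))).1 h0 i (Finset.mem_univ i)
      exact pow_eq_zero_iff (by norm_num) |>.1 this
    have : ∀ i, W.mulVec z i = 0 := by
      intro i
      simp [Matrix.mulVec, dotProduct, hz0]
    simp [this, h0]
  · have hpos : 0 < ∑ i, (z i) ^ 2 :=
      lt_of_le_of_ne (Finset.sum_nonneg fun i _ => sq_nonneg (z i)) (Ne.symm h0)
    set s : ℝ := Real.sqrt (∑ i, (z i) ^ 2) with hs
    have hspos : 0 < s := Real.sqrt_pos.2 hpos
    have hs2 : s ^ 2 = ∑ i, (z i) ^ 2 := Real.sq_sqrt hpos.le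
    set u : Fin N → ℝ := fun i => s⁻¹ * z i with hu
    have husum : (∑ i, u i) = 0 := by
      simp only [hu, ← Finset.mul_sum, hz, mul_zero]
    have husq : (∑ i, (u i) ^ 2) = 1 := by
      simp only [hu, mul_pow, ← Finset.mul_sum, ← hs2]
      field_simp
    have hWu : ∀ i, W.mulVec u i = s⁻¹ * W.mulVec z i := by
      intro i
      simp only [Matrix.mulVec, dotProduct, hu, Finset.mul_sum]
      congr 1; ext j; ring
    have hmem : Real.sqrt (∑ i, (W.mulVec u i) ^ 2) ∈
        {r | ∃ x : Fin N → ℝ, (∑ i, x i) = 0 ∧ (∑ i, (x i) ^ 2) = 1 ∧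
          r = Real.sqrt (∑ i, (W.mulVec x i) ^ 2)} := ⟨u, husum, husq, rfl⟩
    have hle : Real.sqrt (∑ i, (W.mulVec u i) ^ 2) ≤ secondSingular W :=
      le_csSup hbdd hmem
    have hWu2 : ∑ i, (W.mulVec u i) ^ 2 = s⁻¹ ^ 2 * ∑ i, (W.mulVec z i) ^ 2 := by
      simp only [hWu, mul_pow, ← Finset.mul_sum]
    have h1 : ∑ i, (W.mulVec u i) ^ 2 ≤ (secondSingular W) ^ 2 := by
      have hnn : 0 ≤ ∑ i, (W.mulVec u i) ^ 2 := Finset.sum_nonneg fun i _ => sq_nonneg _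
      have := Real.sqrt_le_sqrt (le_of_eq (rfl : (secondSingular W)^2 = (secondSingular W)^2))
      nlinarith [Real.sq_sqrt hnn, Real.sqrt_nonneg (∑ i, (W.mulVec u i) ^ 2), hle]
    rw [hWu2] at h1
    have : ∑ i, (W.mulVec z i) ^ 2 = s ^ 2 * (s⁻¹ ^ 2 * ∑ i, (W.mulVec z i) ^ 2) := by
      field_simp
    rw [this, hs2.symm]
    nlinarith [sq_nonneg s, hspos]

lemma pow_contraction (hnonneg : ∀ i j, 0 ≤ W i j)
    (hrow : ∀ i, ∑ j, W i j = 1) (hcol : ∀ j, ∑ i, W i j = 1) :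
    ∀ (k : ℕ) (z : Fin N → ℝ), (∑ i, z i) = 0 →
      ∑ i, ((W ^ k).mulVec z i) ^ 2 ≤ ((secondSingular W) ^ k) ^ 2 * ∑ i, (z i) ^ 2 := by
  intro k
  induction k with
  | zero =>
      intro z hz
      simp [Matrix.one_mulVec]
  | succ k ih =>
      intro z hz
      have hstep : (W ^ (k + 1)).mulVec z = W.mulVec ((W ^ k).mulVec z) := by
        rw [pow_succ', ← Matrix.mulVec_mulVec]
      set y : Fin N → ℝ := (W ^ k).mulVec z with hy
      have hysum : (∑ i, y i) = 0 := by
        rw [hy, mulVec_sum_eq (W ^ k) (myPowCol W hcol k) z, hz]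
      have h1 : ∑ i, (W.mulVec y i) ^ 2 ≤ (secondSingular W) ^ 2 * ∑ i, (y i) ^ 2 :=
        contraction W hnonneg hrow hcol y hysum
      have h2 : ∑ i, (y i) ^ 2 ≤ ((secondSingular W) ^ k) ^ 2 * ∑ i, (z i) ^ 2 := ih z hz
      rw [hstep]
      calc ∑ i, (W.mulVec y i) ^ 2
          ≤ (secondSingular W) ^ 2 * ∑ i, (y i) ^ 2 := h1
        _ ≤ (secondSingular W) ^ 2 * (((secondSingular W) ^ k) ^ 2 * ∑ i, (z i) ^ 2) :=
            mul_le_mul_of_nonneg_left h2 (sq_nonneg _)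
        _ = ((secondSingular W) ^ (k + 1)) ^ 2 * ∑ i, (z i) ^ 2 := by ring

end aux

/-- Bound on the partial geometric-type sum. -/
lemma key_sum_bound (N : ℕ) (hN : 2 ≤ N) (σ : ℝ) (hσ0 : 0 ≤ σ) (hσ1 : σ < 1) (n : ℕ) :
    ∑ k ∈ Finset.Icc 1 n, min 1 (Real.sqrt N * σ ^ k) ≤ 4 * Real.log N / (1 - σ) := by
  classical
  have hD : 0 < 1 - σ := by linarith
  have hL2 : Real.log 2 ≤ Real.log N := by
    apply Real.log_le_log (by norm_num)
    exact_mod_cast hN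
  have hLpos : 0 < Real.log N := lt_of_lt_of_le (Real.log_pos (by norm_num)) hL2
  set K : ℕ := ⌈Real.log N / (2 * (1 - σ))⌉₊ with hK
  have hKpos : 0 < K := Nat.ceil_pos.2 (by positivity)
  have hKle : (K : ℝ) ≤ Real.log N / (2 * (1 - σ)) + 1 :=
    le_of_lt (Nat.ceil_lt_add_one (by positivity))
  -- √N * σ ^ K ≤ 1
  have hkey : Real.sqrt N * σ ^ K ≤ 1 := by
    rcases eq_or_lt_of_le hσ0 with h0 | h0
    · rw [← h0, zero_pow (by omega), mul_zero]; norm_num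
    · have hlogσ : Real.log σ ≤ σ - 1 := Real.log_le_sub_one_of_pos h0
      have hKge : Real.log N / (2 * (1 - σ)) ≤ (K : ℝ) := Nat.le_ceil _
      have h1 : (K : ℝ) * Real.log σ ≤ -(Real.log N / 2) := by
        have h2 : Real.log N / 2 ≤ (K : ℝ) * (1 - σ) := by
          rw [div_le_iff₀ (by linarith : (0:ℝ) < 2 * (1 - σ))] at hKge
          nlinarith
        nlinarith
      have hσK : σ ^ K = Real.exp ((K : ℝ) * Real.log σ) := by
        rw [← Real.log_pow, Real.exp_log (pow_pos h0 K)]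
      have hNpos : (0:ℝ) < N := by positivity
      have hsqrtN : Real.sqrt N = Real.exp (Real.log N / 2) := by
        have h2 : ((N:ℝ)) = Real.exp (Real.log N / 2) ^ 2 := by
          rw [sq, ← Real.exp_add]
          rw [show Real.log N / 2 + Real.log N / 2 = Real.log N by ring,
            Real.exp_log hNpos]
        conv_lhs => rw [h2]
        rw [Real.sqrt_sq (Real.exp_pos _).le]
      rw [hsqrtN, hσK, ← Real.exp_add]
      calc Real.exp (Real.log N / 2 + (K : ℝ) * Real.log σ) ≤ Real.exp 0 :=
            Real.exp_le_exp.2 (by linarith)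
        _ = 1 := Real.exp_zero
  -- split the sum
  have hgeom : ∑ j ∈ Finset.range n, σ ^ j ≤ 1 / (1 - σ) := by
    have hgm := geom_sum_mul σ n
    have h1 : (∑ j ∈ Finset.range n, σ ^ j) * (1 - σ) = 1 - σ ^ n := by
      nlinarith [hgm]
    rw [le_div_iff₀ hD, h1]
    nlinarith [pow_nonneg hσ0 n]
  have hsplit := Finset.sum_filter_add_sum_filter_not (Finset.Icc 1 n)
    (fun k => k ≤ K) (fun k => min 1 (Real.sqrt N * σ ^ k))
  have hhead : ∑ k ∈ (Finset.Icc 1 n).filter (fun k => k ≤ K),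
      min 1 (Real.sqrt N * σ ^ k) ≤ (K : ℝ) := by
    calc ∑ k ∈ (Finset.Icc 1 n).filter (fun k => k ≤ K),
          min 1 (Real.sqrt N * σ ^ k)
        ≤ ∑ k ∈ (Finset.Icc 1 n).filter (fun k => k ≤ K), 1 :=
          Finset.sum_le_sum fun k _ => min_le_left _ _
      _ = ((Finset.Icc 1 n).filter (fun k => k ≤ K)).card := by simp
      _ ≤ (K : ℝ) := by
          have hsub : (Finset.Icc 1 n).filter (fun k => k ≤ K) ⊆ Finset.Icc 1 K := by
            intro k hk
            simp only [Finset.mem_filter, Finset.mem_Icc] at hk ⊢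
            omega
          have := Finset.card_le_card hsub
          have hcard : (Finset.Icc 1 K).card = K := by
            rw [Nat.card_Icc]; omega
          calc (((Finset.Icc 1 n).filter (fun k => k ≤ K)).card : ℝ)
              ≤ ((Finset.Icc 1 K).card : ℝ) := by exact_mod_cast this
            _ = (K : ℝ) := by rw [hcard]
  have htail : ∑ k ∈ (Finset.Icc 1 n).filter (fun k => ¬ k ≤ K),
      min 1 (Real.sqrt N * σ ^ k) ≤ 1 / (1 - σ) := by
    set T := (Finset.Icc 1 n).filter (fun k => ¬ k ≤ K) with hT
    have hstep1 : ∀ k ∈ T, min 1 (Real.sqrt N * σ ^ k) ≤ σ ^ (k - K - 1) := by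
      intro k hk
      simp only [hT, Finset.mem_filter, Finset.mem_Icc, not_le] at hk
      have hkK : K < k := hk.2
      have hdecomp : σ ^ k = σ ^ K * σ ^ (k - K) := by
        rw [← pow_add]; congr 1; omega
      have h1 : Real.sqrt N * σ ^ k ≤ σ ^ (k - K) := by
        rw [hdecomp, ← mul_assoc]
        calc Real.sqrt N * σ ^ K * σ ^ (k - K) ≤ 1 * σ ^ (k - K) :=
              mul_le_mul_of_nonneg_right hkey (pow_nonneg hσ0 _)
          _ = σ ^ (k - K) := one_mul _
      have h2 : σ ^ (k - K) ≤ σ ^ (k - K - 1) := by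
        apply pow_le_pow_of_le_one hσ0 hσ1.le
        omega
      exact le_trans (min_le_right _ _) (le_trans h1 h2)
    calc ∑ k ∈ T, min 1 (Real.sqrt N * σ ^ k)
        ≤ ∑ k ∈ T, σ ^ (k - K - 1) := Finset.sum_le_sum hstep1
      _ = ∑ j ∈ T.image (fun k => k - K - 1), σ ^ j := by
          rw [Finset.sum_image]
          intro a ha b hb hab
          simp only [hT, Finset.mem_coe, Finset.mem_filter, Finset.mem_Icc, not_le] at ha hb
          simp only at hab
          omega
      _ ≤ ∑ j ∈ Finset.range n, σ ^ j := by
          apply Finset.sum_le_sum_of_subset_of_nonneg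
          · intro j hj
            simp only [Finset.mem_image, hT, Finset.mem_filter, Finset.mem_Icc,
              not_le] at hj
            obtain ⟨k, ⟨⟨hk1, hk2⟩, hk3⟩, rfl⟩ := hj
            simp only [Finset.mem_range]
            omega
          · intro j _ _; exact pow_nonneg hσ0 j
      _ ≤ 1 / (1 - σ) := hgeom
  -- combine
  have htot : ∑ k ∈ Finset.Icc 1 n, min 1 (Real.sqrt N * σ ^ k)
      ≤ (K : ℝ) + 1 / (1 - σ) := by
    rw [← hsplit]; exact add_le_add hhead htail
  have hfin : (K : ℝ) + 1 / (1 - σ) ≤ 4 * Real.log N / (1 - σ) := by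
    set L := Real.log N with hLdef
    set D := 1 - σ with hDdef
    have hDle1 : D ≤ 1 := by simp only [hDdef]; linarith
    have e1 : L / (2 * D) * D = L / 2 := by field_simp
    have e2 : (1 / D) * D = 1 := by field_simp
    have e3 : (4 * L / D) * D = 4 * L := by field_simp
    have hlog2 : (0.6931471803 : ℝ) < Real.log 2 := Real.log_two_gt_d9
    nlinarith [hKle, hD, hL2, mul_pos hD hD]
  linarith [htot, hfin]

theorem merged_parameter_concentration
    (N : ℕ) (hN : 2 ≤ N) (W : Matrix (Fin N) (Fin N) ℝ)
    (hnonneg : ∀ i j, 0 ≤ W i j)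
    (hrow : ∀ i, ∑ j, W i j = 1)
    (hcol : ∀ j, ∑ i, W i j = 1)
    (hconn : ∀ i j, ∃ k : ℕ, 0 < (W ^ k) i j)
    (hσ : secondSingular W < 1)
    (η : ℝ) (hη : 0 < η)
    (x : ℕ → Fin N → ℝ) (hx : ∀ τ j, x τ j ∈ Set.Icc (0:ℝ) 1) :
    ∀ (i : Fin N) (t : ℕ),
      |(η * ∑ τ ∈ Finset.Icc 1 (t - 1), ∑ j, (W ^ (t - τ)) i j * x τ j + 1)
          - 1 - (η / N) * ∑ τ ∈ Finset.Icc 1 (t - 1), ∑ j, x τ j|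
        ≤ 4 * η * Real.log N / (1 - secondSingular W) := by
  classical
  intro i t
  have hσ0 : 0 ≤ secondSingular W := secondSingular_nonneg W hN hnonneg hrow hcol
  set σ := secondSingular W with hσdef
  have hD : 0 < 1 - σ := by linarith
  have hNpos : (0:ℝ) < N := by positivity
  -- rewrite the expression
  have hrw : (η * ∑ τ ∈ Finset.Icc 1 (t - 1), ∑ j, (W ^ (t - τ)) i j * x τ j + 1)
          - 1 - (η / N) * ∑ τ ∈ Finset.Icc 1 (t - 1), ∑ j, x τ j
      = η * ∑ τ ∈ Finset.Icc 1 (t - 1),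
          ((∑ j, (W ^ (t - τ)) i j * x τ j) - (1 / N) * ∑ j, x τ j) := by
    rw [Finset.sum_sub_distrib, ← Finset.mul_sum]
    ring
  -- per-term bound
  have hbound : ∀ τ ∈ Finset.Icc 1 (t - 1),
      |(∑ j, (W ^ (t - τ)) i j * x τ j) - (1 / N) * ∑ j, x τ j|
        ≤ min 1 (Real.sqrt N * σ ^ (t - τ)) := by
    intro τ hτ
    set k := t - τ with hk
    set m : ℝ := (1 / N) * ∑ j, x τ j with hm
    have hA0 : 0 ≤ ∑ j, (W ^ k) i j * x τ j :=
      Finset.sum_nonneg fun j _ =>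
        mul_nonneg (myPowNonneg W hnonneg k i j) (hx τ j).1
    have hA1 : ∑ j, (W ^ k) i j * x τ j ≤ 1 := by
      calc ∑ j, (W ^ k) i j * x τ j ≤ ∑ j, (W ^ k) i j * 1 :=
            Finset.sum_le_sum fun j _ =>
              mul_le_mul_of_nonneg_left (hx τ j).2 (myPowNonneg W hnonneg k i j)
        _ = 1 := by simp [myPowRow W hrow k i]
    have hxs0 : 0 ≤ ∑ j, x τ j := Finset.sum_nonneg fun j _ => (hx τ j).1
    have hxsN : ∑ j, x τ j ≤ N := by
      calc ∑ j, x τ j ≤ ∑ _j : Fin N, (1:ℝ) :=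
            Finset.sum_le_sum fun j _ => (hx τ j).2
        _ = N := by simp
    have hm0 : 0 ≤ m := by
      rw [hm]; positivity
    have hm1 : m ≤ 1 := by
      rw [hm, one_div]
      rw [inv_mul_le_iff₀ hNpos]
      linarith
    have habs1 : |(∑ j, (W ^ k) i j * x τ j) - m| ≤ 1 :=
      abs_le.2 ⟨by linarith, by linarith⟩
    -- second bound via contraction
    set z : Fin N → ℝ := fun j => x τ j - m with hz
    have hzsum : (∑ j, z j) = 0 := by
      simp only [hz, Finset.sum_sub_distrib, Finset.sum_const, Finset.card_univ,
        Fintype.card_fin, nsmul_eq_mul, hm]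
      field_simp
      ring
    have hdeq : (∑ j, (W ^ k) i j * x τ j) - m = (W ^ k).mulVec z i := by
      simp only [Matrix.mulVec, dotProduct, hz, mul_sub,
        Finset.sum_sub_distrib, ← Finset.sum_mul, myPowRow W hrow k i, one_mul]
    have hz2 : ∑ j, (z j) ^ 2 ≤ N := by
      calc ∑ j, (z j) ^ 2 ≤ ∑ _j : Fin N, (1:ℝ) := by
            apply Finset.sum_le_sum
            intro j _
            have h1 := (hx τ j).1
            have h2 := (hx τ j).2
            simp only [hz]
            nlinarith
        _ = N := by simp
    have hcontr := pow_contraction W hnonneg hrow hcol k z hzsum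
    have hsq : ((W ^ k).mulVec z i) ^ 2 ≤ (σ ^ k) ^ 2 * N := by
      calc ((W ^ k).mulVec z i) ^ 2 ≤ ∑ l, ((W ^ k).mulVec z l) ^ 2 :=
            Finset.single_le_sum (f := fun l => ((W ^ k).mulVec z l) ^ 2)
              (fun l _ => sq_nonneg _) (Finset.mem_univ i)
        _ ≤ (σ ^ k) ^ 2 * ∑ j, (z j) ^ 2 := hcontr
        _ ≤ (σ ^ k) ^ 2 * N := mul_le_mul_of_nonneg_left hz2 (sq_nonneg _)
    have habs2 : |(∑ j, (W ^ k) i j * x τ j) - m| ≤ Real.sqrt N * σ ^ k := by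
      rw [hdeq, ← Real.sqrt_sq_eq_abs]
      calc Real.sqrt (((W ^ k).mulVec z i) ^ 2)
          ≤ Real.sqrt ((σ ^ k) ^ 2 * N) := Real.sqrt_le_sqrt hsq
        _ = σ ^ k * Real.sqrt N := by
            rw [Real.sqrt_mul (sq_nonneg _), Real.sqrt_sq (pow_nonneg hσ0 k)]
        _ = Real.sqrt N * σ ^ k := mul_comm _ _
    exact le_min habs1 habs2
  -- reindex
  have hreindex : ∑ τ ∈ Finset.Icc 1 (t - 1), min 1 (Real.sqrt N * σ ^ (t - τ))
      = ∑ k ∈ Finset.Icc 1 (t - 1), min 1 (Real.sqrt N * σ ^ k) := by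
    apply Finset.sum_nbij' (fun τ => t - τ) (fun k => t - k)
    · intro a ha; simp only [Finset.mem_Icc] at ha ⊢; omega
    · intro a ha; simp only [Finset.mem_Icc] at ha ⊢; omega
    · intro a ha; simp only [Finset.mem_Icc] at ha; omega
    · intro a ha; simp only [Finset.mem_Icc] at ha; omega
    · intro a _; rfl
  -- put everything together
  rw [hrw]
  calc |η * ∑ τ ∈ Finset.Icc 1 (t - 1),
          ((∑ j, (W ^ (t - τ)) i j * x τ j) - (1 / N) * ∑ j, x τ j)|
      = η * |∑ τ ∈ Finset.Icc 1 (t - 1),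
          ((∑ j, (W ^ (t - τ)) i j * x τ j) - (1 / N) * ∑ j, x τ j)| := by
        rw [abs_mul, abs_of_pos hη]
    _ ≤ η * ∑ τ ∈ Finset.Icc 1 (t - 1),
          |(∑ j, (W ^ (t - τ)) i j * x τ j) - (1 / N) * ∑ j, x τ j| :=
        mul_le_mul_of_nonneg_left (Finset.abs_sum_le_sum_abs _ _) hη.le
    _ ≤ η * ∑ τ ∈ Finset.Icc 1 (t - 1), min 1 (Real.sqrt N * σ ^ (t - τ)) :=
        mul_le_mul_of_nonneg_left (Finset.sum_le_sum hbound) hη.le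
    _ = η * ∑ k ∈ Finset.Icc 1 (t - 1), min 1 (Real.sqrt N * σ ^ k) := by
        rw [hreindex]
    _ ≤ η * (4 * Real.log N / (1 - σ)) :=
        mul_le_mul_of_nonneg_left (key_sum_bound N hN σ hσ0 hσ (t - 1)) hη.le
    _ = 4 * η * Real.log N / (1 - σ) := by ring
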